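/- Let τ be a θ-compatible stopping time with 𝔼_x τ < ∞ for every x ∈ 𝐗, and let ν be a nonzero Q-invariant borelian measure on 𝐗. Then R*ν is a nonzero P-invariant measure on 𝐗, S*R*ν = ν, and ν is absolutely continuous with respect to R*ν. Moreover, if the function QR(1) is bounded on 𝐗, then R*ν is a finite measure if and only if ν is a finite measure. -/

import Mathlib

open MeasureTheory Filter Set Topology
open scoped ENNReal NNReal ENat

noncomputable section

/-- The shift on path space. -/
def pshift {X : Type*} (ω : ℕ → X) : ℕ → X := fun n => ω (n + 1)

/-- The natural filtration on path space: the σ-algebra generated by the first `n+1`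
coordinates. -/
def pathFiltration (X : Type*) [MeasurableSpace X] (n : ℕ) : MeasurableSpace (ℕ → X) :=
  MeasurableSpace.comap (fun ω (i : Fin (n + 1)) => ω (i : ℕ)) inferInstance

/-- A Markov chain on `X`, given by the family of its path-space laws `ℙ_x`. -/
structure MarkovChain (X : Type*) [MeasurableSpace X] where
  law : X → Measure (ℕ → X)
  prob : ∀ x, IsProbabilityMeasure (law x)
  meas_law : Measurable law
  start : ∀ x, (law x).map (fun ω => ω 0) = Measure.dirac x
  markov : ∀ (x : X) (n : ℕ) (A : Set (ℕ → X)),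
      MeasurableSet[pathFiltration X n] A → ∀ g : (ℕ → X) → ℝ≥0∞, Measurable g →
      ∫⁻ ω in A, g (fun k => ω (k + n)) ∂law x = ∫⁻ ω in A, ∫⁻ η, g η ∂law (ω n) ∂law x

variable {X : Type*} [MeasurableSpace X]

/-- A stopping time on path space, with values in `ℕ∞`. -/
def IsPathStoppingTime (τ : (ℕ → X) → ℕ∞) : Prop :=
  ∀ n : ℕ, MeasurableSet[pathFiltration X n] {ω | τ ω = (n : ℕ∞)}

/-- `τ` is θ-compatible: `ℙ_x(τ = 0) = 0` and, almost everywhere, `τ ≥ 2` implies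
`τ ∘ θ = τ - 1`. -/
def ThetaCompatible (M : MarkovChain X) (τ : (ℕ → X) → ℕ∞) : Prop :=
  (∀ x, M.law x {ω | τ ω = 0} = 0) ∧
    ∀ x, ∀ᵐ ω ∂M.law x, 2 ≤ τ ω → τ (pshift ω) = τ ω - 1

/-- The Markov operator `P` on nonnegative functions: `Pf(x) = 𝔼_x f(X_1)`. -/
def Pop (M : MarkovChain X) (f : X → ℝ≥0∞) (x : X) : ℝ≥0∞ := ∫⁻ ω, f (ω 1) ∂M.law x

/-- The induced operator `Q`: `Qg(x) = ∫_{τ<∞} g(X_τ) dℙ_x`. -/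
def Qop (M : MarkovChain X) (τ : (ℕ → X) → ℕ∞) (g : X → ℝ≥0∞) (x : X) : ℝ≥0∞ :=
  ∫⁻ ω in {ω | τ ω ≠ ⊤}, g (ω (τ ω).toNat) ∂M.law x

/-- The operator `S`: `Sf(x) = ∫_{τ=1} f(X_1) dℙ_x`. -/
def Sop (M : MarkovChain X) (τ : (ℕ → X) → ℕ∞) (f : X → ℝ≥0∞) (x : X) : ℝ≥0∞ :=
  ∫⁻ ω in {ω | τ ω = 1}, f (ω 1) ∂M.law x

/-- The operator `R`: `Rf(x) = ∫_{τ<∞} (f(X_0) + ⋯ + f(X_{τ-1})) dℙ_x`. -/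
def Rop (M : MarkovChain X) (τ : (ℕ → X) → ℕ∞) (f : X → ℝ≥0∞) (x : X) : ℝ≥0∞ :=
  ∫⁻ ω in {ω | τ ω ≠ ⊤}, ∑ k ∈ Finset.range (τ ω).toNat, f (ω k) ∂M.law x

/-- `𝔼_x τ`, with values in `[0,∞]`. -/
def EtauE (M : MarkovChain X) (τ : (ℕ → X) → ℕ∞) (x : X) : ℝ≥0∞ :=
  ∫⁻ ω, (τ ω : ℝ≥0∞) ∂M.law x

/-- `μ` is `P`-invariant: `∫ Pf dμ = ∫ f dμ` for every bounded nonnegative borelian `f`. -/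
def PInvariant (M : MarkovChain X) (μ : Measure X) : Prop :=
  ∀ f : X → ℝ≥0∞, Measurable f → (∃ C : ℝ≥0∞, C ≠ ⊤ ∧ ∀ x, f x ≤ C) →
    ∫⁻ x, Pop M f x ∂μ = ∫⁻ x, f x ∂μ

/-- `ν` is `Q`-invariant: `∫ Qf dν = ∫ f dν` for every bounded nonnegative borelian `f`. -/
def QInvariant (M : MarkovChain X) (τ : (ℕ → X) → ℕ∞) (ν : Measure X) : Prop :=
  ∀ f : X → ℝ≥0∞, Measurable f → (∃ C : ℝ≥0∞, C ≠ ⊤ ∧ ∀ x, f x ≤ C) →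
    ∫⁻ x, Qop M τ f x ∂ν = ∫⁻ x, f x ∂ν

/-- `ν = S*μ`, i.e. `ν(A) = ∫ S𝟙_A dμ` for every borelian `A`. -/
def SstarEq (M : MarkovChain X) (τ : (ℕ → X) → ℕ∞) (μ ν : Measure X) : Prop :=
  ∀ A : Set X, MeasurableSet A → ν A = ∫⁻ x, Sop M τ (A.indicator 1) x ∂μ

/-- `m = R*ν`, i.e. `m(A) = ∫ R𝟙_A dν` for every borelian `A`. -/
def RstarEq (M : MarkovChain X) (τ : (ℕ → X) → ℕ∞) (ν m : Measure X) : Prop :=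
  ∀ A : Set X, MeasurableSet A → m A = ∫⁻ x, Rop M τ (A.indicator 1) x ∂ν

/-- the real-valued Markov operator -/
def Pr (M : MarkovChain X) (f : X → ℝ) (x : X) : ℝ := ∫ ω, f (ω 1) ∂M.law x

/-- the real-valued induced operator -/
def Qr (M : MarkovChain X) (τ : (ℕ → X) → ℕ∞) (g : X → ℝ) (x : X) : ℝ :=
  ∫ ω in {ω | τ ω ≠ ⊤}, g (ω (τ ω).toNat) ∂M.law x

/-- the real-valued operator `S` -/
def Sr (M : MarkovChain X) (τ : (ℕ → X) → ℕ∞) (f : X → ℝ) (x : X) : ℝ :=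
  ∫ ω in {ω | τ ω = 1}, f (ω 1) ∂M.law x

/-- the real-valued operator `R` -/
def Rr (M : MarkovChain X) (τ : (ℕ → X) → ℕ∞) (f : X → ℝ) (x : X) : ℝ :=
  ∫ ω in {ω | τ ω ≠ ⊤}, ∑ k ∈ Finset.range (τ ω).toNat, f (ω k) ∂M.law x

/-- `𝔼_x τ` as a real number. -/
def Etau (M : MarkovChain X) (τ : (ℕ → X) → ℕ∞) (x : X) : ℝ := (EtauE M τ x).toReal

/-- `B_u = sup (Pu - u) + 1`. -/
def Bu (M : MarkovChain X) (u : X → ℝ) : ℝ :=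
  sSup (Set.range fun x => Pr M u x - u x) + 1

/-- the weight `u - Pu + B_u` defining the space `𝓔_u`. -/
def wE (M : MarkovChain X) (u : X → ℝ) : X → ℝ := fun x => u x - Pr M u x + Bu M u

/-- `u` is a drift function: `u ≥ 1`, `u - Pu` is bounded below and, with
`B_u = sup (Pu - u) + 1`, the functions `Qu`, `𝔼τ/u` and `P(u-Pu+B_u)/(u-Pu+B_u)` are
bounded. -/
structure IsDrift (M : MarkovChain X) (τ : (ℕ → X) → ℕ∞) (u : X → ℝ) : Prop where
  meas : Measurable u
  one_le : ∀ x, 1 ≤ u x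
  int_one : ∀ x, Integrable (fun ω => u (ω 1)) (M.law x)
  bdd : BddAbove (Set.range fun x => Pr M u x - u x)
  etau_ne_top : ∀ x, EtauE M τ x ≠ ⊤
  qu_bdd : ∃ C : ℝ, ∀ x, Qr M τ u x ≤ C
  etau_div_bdd : ∃ C : ℝ, ∀ x, Etau M τ x ≤ C * u x
  pw_bdd : ∃ C : ℝ, ∀ x, Pr M (wE M u) x ≤ C * wE M u x

/-- membership in the weighted space `𝓕^p_v` : `f` is borelian and `|f| ≤ C v^{1/p}`. -/
def MemWp (v : X → ℝ) (p : ℝ) (f : X → ℝ) : Prop :=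
  Measurable f ∧ ∃ C : ℝ, ∀ x, |f x| ≤ C * v x ^ (1 / p)

/-- the norm of the weighted space `𝓕^p_v` : `‖f‖ = sup_x |f(x)|/v(x)^{1/p}`. -/
def normWp (v : X → ℝ) (p : ℝ) (f : X → ℝ) : ℝ := ⨆ x, |f x| / v x ^ (1 / p)

/-- ergodicity among a class of invariant measures: a finite nonzero invariant measure is
ergodic if it is not a nontrivial convex combination of two distinct invariant probability
measures. -/
def ErgodicAmong (Inv : Measure X → Prop) (μ : Measure X) : Prop :=
  μ ≠ 0 ∧ ∀ (ν₁ ν₂ : Measure X) (t : ℝ≥0∞), Inv ν₁ → Inv ν₂ →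
    IsProbabilityMeasure ν₁ → IsProbabilityMeasure ν₂ → 0 < t → t < 1 →
    μ = μ Set.univ • (t • ν₁ + (1 - t) • ν₂) → ν₁ = ν₂


section Aux

open ProbabilityTheory

variable {X : Type*} [MeasurableSpace X]

lemma pathFiltration_le (n : ℕ) :
    pathFiltration X n ≤ (inferInstance : MeasurableSpace (ℕ → X)) := by
  exact (measurable_pi_lambda (fun (ω : ℕ → X) (i : Fin (n + 1)) => ω (i : ℕ))
    fun i => measurable_pi_apply (i : ℕ)).comap_le

lemma pathFiltration_mono {n m : ℕ} (h : n ≤ m) :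
    pathFiltration X n ≤ pathFiltration X m := by
  have hr : Measurable fun (g : Fin (m + 1) → X) (i : Fin (n + 1)) =>
      g (Fin.castLE (by omega : n + 1 ≤ m + 1) i) :=
    measurable_pi_lambda _ fun i => measurable_pi_apply _
  have : (fun (ω : ℕ → X) (i : Fin (n + 1)) => ω (i : ℕ)) =
      (fun (g : Fin (m + 1) → X) (i : Fin (n + 1)) => g (Fin.castLE (by omega) i)) ∘
        (fun ω (i : Fin (m + 1)) => ω (i : ℕ)) := rfl
  rw [pathFiltration, pathFiltration, this, ← MeasurableSpace.comap_comp]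
  exact MeasurableSpace.comap_mono hr.comap_le

variable (M : MarkovChain X) (τ : (ℕ → X) → ℕ∞)

lemma meas_tau (hst : IsPathStoppingTime τ) : Measurable τ :=
  ENat.measurable_iff.2 fun n => pathFiltration_le n _ (hst n)

lemma measSet_lt_filt (hst : IsPathStoppingTime τ) (k : ℕ) :
    MeasurableSet[pathFiltration X k] {ω | (k : ℕ∞) < τ ω} := by
  have : {ω : ℕ → X | (k : ℕ∞) < τ ω} =
      (⋃ j ∈ Set.Iic k, {ω | τ ω = (j : ℕ∞)})ᶜ := by
    ext ω
    simp only [Set.mem_compl_iff, Set.mem_iUnion, Set.mem_setOf_eq, not_exists,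
      Set.mem_Iic]
    constructor
    · intro h j hj hje
      rw [hje] at h
      exact absurd (Nat.cast_lt.1 h) (by omega)
    · intro h
      by_contra hc
      push_neg at hc
      have hne : τ ω ≠ ⊤ := by
        intro ht; rw [ht] at hc; exact absurd (le_antisymm hc le_top) (by simp)
      lift τ ω to ℕ using hne with j hje
      have hjk : j ≤ k := Nat.cast_le.1 hc
      exact h j hjk rfl
  rw [this]
  refine MeasurableSet.compl ?_
  refine MeasurableSet.biUnion (Set.to_countable _) fun j hj => ?_
  exact pathFiltration_mono hj _ (hst j)

lemma measSet_lt (hst : IsPathStoppingTime τ) (k : ℕ) :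
    MeasurableSet {ω : ℕ → X | (k : ℕ∞) < τ ω} :=
  pathFiltration_le k _ (measSet_lt_filt τ hst k)

lemma measSet_ne_top (hst : IsPathStoppingTime τ) :
    MeasurableSet {ω : ℕ → X | τ ω ≠ ⊤} :=
  ((meas_tau τ hst) (measurableSet_singleton ⊤)).compl

lemma measSet_eq (hst : IsPathStoppingTime τ) (n : ℕ∞) :
    MeasurableSet {ω : ℕ → X | τ ω = n} :=
  (meas_tau τ hst) (measurableSet_singleton n)

lemma meas_eval_toNat (hst : IsPathStoppingTime τ) :
    Measurable fun ω : ℕ → X => ω ((τ ω).toNat) := by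
  have h1 : Measurable fun p : (ℕ → X) × ℕ => p.1 p.2 :=
    measurable_from_prod_countable_left fun n => measurable_pi_apply n
  exact h1.comp (measurable_id.prodMk
    ((measurable_of_countable ENat.toNat).comp (meas_tau τ hst)))

lemma meas_sum_tau (hst : IsPathStoppingTime τ) {f : X → ℝ≥0∞} (hf : Measurable f) :
    Measurable fun ω : ℕ → X => ∑ k ∈ Finset.range (τ ω).toNat, f (ω k) := by
  have h0 : ∀ n : ℕ, Measurable fun ω : ℕ → X => ∑ k ∈ Finset.range n, f (ω k) :=
    fun n => Finset.measurable_sum _ fun k _ => hf.comp (measurable_pi_apply k)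
  have h1 : Measurable fun p : (ℕ → X) × ℕ => ∑ k ∈ Finset.range p.2, f (p.1 k) :=
    measurable_from_prod_countable_left fun n => h0 n
  exact h1.comp (measurable_id.prodMk
    ((measurable_of_countable ENat.toNat).comp (meas_tau τ hst)))

/-- the kernel of the chain -/
def ker : Kernel X (ℕ → X) := ⟨M.law, M.meas_law⟩

lemma ker_apply (x : X) : ker M x = M.law x := rfl

instance : IsMarkovKernel (ker M) := ⟨fun x => M.prob x⟩

lemma measurable_Pop {f : X → ℝ≥0∞} (hf : Measurable f) : Measurable (Pop M f) :=
  Measurable.lintegral_kernel (κ := ker M) (hf.comp (measurable_pi_apply 1))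

lemma measurable_Qop (hst : IsPathStoppingTime τ) {f : X → ℝ≥0∞} (hf : Measurable f) :
    Measurable (Qop M τ f) := by
  have : Qop M τ f = fun x => ∫⁻ ω,
      ({ω : ℕ → X | τ ω ≠ ⊤}.indicator fun ω => f (ω (τ ω).toNat)) ω ∂M.law x := by
    funext x
    rw [lintegral_indicator (measSet_ne_top τ hst)]
    rfl
  rw [this]
  exact Measurable.lintegral_kernel (κ := ker M)
    ((hf.comp (meas_eval_toNat τ hst)).indicator (measSet_ne_top τ hst))

lemma measurable_Sop (hst : IsPathStoppingTime τ) {f : X → ℝ≥0∞} (hf : Measurable f) :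
    Measurable (Sop M τ f) := by
  have : Sop M τ f = fun x => ∫⁻ ω,
      ({ω : ℕ → X | τ ω = 1}.indicator fun ω => f (ω 1)) ω ∂M.law x := by
    funext x
    rw [lintegral_indicator (measSet_eq τ hst 1)]
    rfl
  rw [this]
  exact Measurable.lintegral_kernel (κ := ker M)
    ((hf.comp (measurable_pi_apply 1)).indicator (measSet_eq τ hst 1))

lemma measurable_Rop (hst : IsPathStoppingTime τ) {f : X → ℝ≥0∞} (hf : Measurable f) :
    Measurable (Rop M τ f) := by
  have : Rop M τ f = fun x => ∫⁻ ω,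
      ({ω : ℕ → X | τ ω ≠ ⊤}.indicator fun ω =>
        ∑ k ∈ Finset.range (τ ω).toNat, f (ω k)) ω ∂M.law x := by
    funext x
    rw [lintegral_indicator (measSet_ne_top τ hst)]
    rfl
  rw [this]
  exact Measurable.lintegral_kernel (κ := ker M)
    ((meas_sum_tau τ hst hf).indicator (measSet_ne_top τ hst))

end Aux
section Aux2

open ProbabilityTheory

variable {X : Type*} [MeasurableSpace X] (M : MarkovChain X) (τ : (ℕ → X) → ℕ∞)

lemma measurable_pshift : Measurable (pshift (X := X)) :=
  measurable_pi_lambda _ fun n => measurable_pi_apply (n + 1)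

lemma measurable_shiftn (n : ℕ) : Measurable fun (ω : ℕ → X) (i : ℕ) => ω (i + n) :=
  measurable_pi_lambda _ fun i => measurable_pi_apply (i + n)

lemma ae_start [MeasurableSingletonClass X] (x : X) : ∀ᵐ ω ∂M.law x, ω 0 = x := by
  rw [ae_iff]
  have hm : MeasurableSet {y : X | ¬ y = x} := (measurableSet_singleton x).compl
  have h1 : (M.law x).map (fun ω => ω 0) {y | ¬ y = x} = M.law x {ω | ¬ ω 0 = x} :=
    Measure.map_apply (measurable_pi_apply 0) hm
  rw [M.start x, Measure.dirac_apply' _ hm] at h1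
  rw [← h1]
  simp

lemma ae_tau_ne_zero (hθ : ThetaCompatible M τ) (x : X) : ∀ᵐ ω ∂M.law x, τ ω ≠ 0 := by
  rw [ae_iff]
  simpa using hθ.1 x

lemma ae_one_le_tau (hθ : ThetaCompatible M τ) (x : X) : ∀ᵐ ω ∂M.law x, 1 ≤ τ ω :=
  (ae_tau_ne_zero M τ hθ x).mono fun ω h => ENat.one_le_iff_ne_zero.2 h

lemma ae_tau_ne_top (hst : IsPathStoppingTime τ) (hτ : ∀ x, EtauE M τ x ≠ ⊤) (x : X) :
    ∀ᵐ ω ∂M.law x, τ ω ≠ ⊤ := by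
  have hmeas : Measurable fun ω : ℕ → X => ((τ ω : ℕ∞) : ℝ≥0∞) :=
    (measurable_of_countable (fun n : ℕ∞ => (n : ℝ≥0∞))).comp (meas_tau τ hst)
  filter_upwards [ae_lt_top hmeas (hτ x)] with ω h
  intro ht
  rw [ht, ENat.toENNReal_top] at h
  exact absurd h (lt_irrefl _)

lemma law_shift_null {B : Set (ℕ → X)} (hB : MeasurableSet B) (h0 : ∀ y, M.law y B = 0)
    (x : X) (n : ℕ) : M.law x ((fun ω (i : ℕ) => ω (i + n)) ⁻¹' B) = 0 := by
  have hmk := M.markov x n Set.univ MeasurableSet.univ (B.indicator 1)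
    (measurable_one.indicator hB)
  simp only [Measure.restrict_univ] at hmk
  have hL : ∫⁻ ω, (B.indicator 1) (fun k => ω (k + n)) ∂M.law x
      = M.law x ((fun ω (i : ℕ) => ω (i + n)) ⁻¹' B) := by
    have : (fun ω : ℕ → X => (B.indicator 1) (fun k => ω (k + n)))
        = ((fun ω (i : ℕ) => ω (i + n)) ⁻¹' B).indicator (1 : (ℕ → X) → ℝ≥0∞) := by
      funext ω
      by_cases hω : (fun k => ω (k + n)) ∈ B <;>
        simp [Set.indicator_apply, hω, Set.mem_preimage]
    rw [this, lintegral_indicator_one ((measurable_shiftn n) hB)]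
  have hR : ∫⁻ ω, ∫⁻ η, B.indicator 1 η ∂M.law (ω n) ∂M.law x = 0 := by
    have : ∀ ω : ℕ → X, ∫⁻ η, B.indicator (1 : (ℕ → X) → ℝ≥0∞) η ∂M.law (ω n) = 0 := by
      intro ω
      rw [lintegral_indicator_one hB]
      exact h0 _
    simp [this]
  rw [← hL, hmk, hR]

lemma ae_theta_iter (hst : IsPathStoppingTime τ) (hθ : ThetaCompatible M τ) (x : X) :
    ∀ᵐ ω ∂M.law x, ∀ k : ℕ, (k : ℕ∞) < τ ω → τ (fun i => ω (i + k)) = τ ω - k := by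
  set B : Set (ℕ → X) :=
    (fun ω => (τ (pshift ω), τ ω)) ⁻¹' {p : ℕ∞ × ℕ∞ | 2 ≤ p.2 ∧ p.1 ≠ p.2 - 1} with hBdef
  have hB : MeasurableSet B :=
    (((meas_tau τ hst).comp (measurable_pshift)).prodMk (meas_tau τ hst))
      ((Set.to_countable _).measurableSet)
  have h0 : ∀ y, M.law y B = 0 := by
    intro y
    have h := hθ.2 y
    rw [ae_iff] at h
    convert h using 2
    ext ω
    simp only [hBdef, Set.mem_preimage, Set.mem_setOf_eq]
    tauto
  have hshift : ∀ᵐ ω ∂M.law x, ∀ n : ℕ, (fun i => ω (i + n)) ∉ B :=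
    ae_all_iff.2 fun n => measure_eq_zero_iff_ae_notMem.1 (law_shift_null M hB h0 x n)
  filter_upwards [hshift] with ω hω
  intro k
  induction k with
  | zero =>
    intro _
    simp only [Nat.cast_zero, tsub_zero, add_zero]
  | succ k ih =>
    intro hk1
    have hk : (k : ℕ∞) < τ ω :=
      lt_of_le_of_lt (by exact_mod_cast Nat.le_succ k) hk1
    have h1 := ih hk
    have hmem := hω k
    rw [hBdef, Set.mem_preimage, Set.mem_setOf_eq, not_and, not_not] at hmem
    dsimp only at hmem
    have h2 : 2 ≤ τ (fun i => ω (i + k)) := by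
      rw [h1]
      rcases eq_or_ne (τ ω) ⊤ with ht | ht
      · rw [ht, ENat.top_sub_coe]
        exact le_top
      · lift τ ω to ℕ using ht with m hm
        have hlt : k + 1 < m := by exact_mod_cast hk1
        rw [← ENat.coe_sub]
        exact_mod_cast (by omega : 2 ≤ m - k)
    have h3 := hmem h2
    have h4 : pshift (fun i => ω (i + k)) = fun i => ω (i + (k + 1)) := by
      funext i
      simp only [pshift]
      congr 1
      omega
    rw [h4] at h3
    rw [h3, h1, tsub_tsub]
    norm_cast

lemma ae_good (hst : IsPathStoppingTime τ) (hθ : ThetaCompatible M τ)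
    (hτ : ∀ x, EtauE M τ x ≠ ⊤) (x : X) :
    ∀ᵐ ω ∂M.law x, (1 ≤ τ ω ∧ τ ω ≠ ⊤) ∧
      ∀ k : ℕ, (k : ℕ∞) < τ ω → τ (fun i => ω (i + k)) = τ ω - k := by
  filter_upwards [ae_one_le_tau M τ hθ x, ae_tau_ne_top M τ hst hτ x,
    ae_theta_iter M τ hst hθ x] with ω h1 h2 h3
  exact ⟨⟨h1, h2⟩, h3⟩

end Aux2
section Aux3

open ProbabilityTheory

variable {X : Type*} [MeasurableSpace X] (M : MarkovChain X) (τ : (ℕ → X) → ℕ∞)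

omit [MeasurableSpace X] in
lemma lt_tau_iff_toNat {ω : ℕ → X} (hne : τ ω ≠ ⊤) (k : ℕ) :
    (k : ℕ∞) < τ ω ↔ k < (τ ω).toNat := by
  obtain ⟨m, hm⟩ : ∃ m : ℕ, τ ω = (m : ℕ∞) := ⟨(τ ω).toNat, (ENat.coe_toNat hne).symm⟩
  rw [hm, ENat.toNat_coe, Nat.cast_lt]

omit [MeasurableSpace X] in
lemma tsum_indicator_lt {ω : ℕ → X} (hne : τ ω ≠ ⊤) (F : ℕ → (ℕ → X) → ℝ≥0∞) :
    (∑' k : ℕ, ({ω' | (k : ℕ∞) < τ ω'}.indicator (F k)) ω)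
      = ∑ k ∈ Finset.range (τ ω).toNat, F k ω := by
  refine (tsum_eq_sum fun k hk => ?_).trans (Finset.sum_congr rfl fun k hk => ?_)
  · exact Set.indicator_of_notMem
      (show ω ∉ {ω' | (k : ℕ∞) < τ ω'} from
        fun hmem => hk (Finset.mem_range.2 ((lt_tau_iff_toNat τ hne k).1 hmem))) _
  · exact Set.indicator_of_mem
      (show ω ∈ {ω' | (k : ℕ∞) < τ ω'} from
        (lt_tau_iff_toNat τ hne k).2 (Finset.mem_range.1 hk)) _

omit [MeasurableSpace X] in
lemma one_le_toNat {ω : ℕ → X} (hne : τ ω ≠ ⊤) (h1 : 1 ≤ τ ω) : 1 ≤ (τ ω).toNat := by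
  obtain ⟨m, hm⟩ : ∃ m : ℕ, τ ω = (m : ℕ∞) := ⟨(τ ω).toNat, (ENat.coe_toNat hne).symm⟩
  rw [hm, ENat.toNat_coe]
  exact_mod_cast hm ▸ h1

omit [MeasurableSpace X] in
lemma tsum_indicator_eq {ω : ℕ → X} (hne : τ ω ≠ ⊤) (h1 : 1 ≤ τ ω)
    (F : ℕ → (ℕ → X) → ℝ≥0∞) :
    (∑' k : ℕ, ({ω' | τ ω' = ((k + 1 : ℕ) : ℕ∞)}.indicator (F k)) ω)
      = F ((τ ω).toNat - 1) ω := by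
  have hm1 : 1 ≤ (τ ω).toNat := one_le_toNat τ hne h1
  refine (tsum_eq_single ((τ ω).toNat - 1) fun k hk => ?_).trans ?_
  · refine Set.indicator_of_notMem (show ω ∉ {ω' | τ ω' = ((k + 1 : ℕ) : ℕ∞)} from ?_) _
    intro hmem
    have : (τ ω).toNat = k + 1 := by
      rw [Set.mem_setOf_eq] at hmem
      rw [hmem, ENat.toNat_coe]
    omega
  · refine Set.indicator_of_mem (show ω ∈ {ω' | τ ω' = (((τ ω).toNat - 1 + 1 : ℕ) : ℕ∞)}
      from ?_) _
    rw [Set.mem_setOf_eq]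
    have h2 : (τ ω).toNat - 1 + 1 = (τ ω).toNat := by omega
    rw [h2, ENat.coe_toNat hne]

lemma Rop_int_form (hst : IsPathStoppingTime τ) (hτ : ∀ x, EtauE M τ x ≠ ⊤)
    (f : X → ℝ≥0∞) (x : X) :
    Rop M τ f x = ∫⁻ ω, (∑' k : ℕ,
      ({ω' | (k : ℕ∞) < τ ω'}.indicator fun ω => f (ω k)) ω) ∂M.law x := by
  have h1 : Rop M τ f x = ∫⁻ ω, ({ω' : ℕ → X | τ ω' ≠ ⊤}.indicator
      (fun ω => ∑ k ∈ Finset.range (τ ω).toNat, f (ω k))) ω ∂M.law x :=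
    (lintegral_indicator (measSet_ne_top τ hst) _).symm
  rw [h1]
  refine lintegral_congr_ae ?_
  filter_upwards [ae_tau_ne_top M τ hst hτ x] with ω hne
  rw [Set.indicator_of_mem (show ω ∈ {ω' | τ ω' ≠ ⊤} from hne),
    tsum_indicator_lt τ hne]

lemma Rop_eq_tsum (hst : IsPathStoppingTime τ) (hτ : ∀ x, EtauE M τ x ≠ ⊤)
    {f : X → ℝ≥0∞} (hf : Measurable f) (x : X) :
    Rop M τ f x = ∑' k : ℕ, ∫⁻ ω in {ω | (k : ℕ∞) < τ ω}, f (ω k) ∂M.law x := by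
  rw [Rop_int_form M τ hst hτ f x]
  calc ∫⁻ ω, (∑' k : ℕ, ({ω' | (k : ℕ∞) < τ ω'}.indicator fun ω => f (ω k)) ω) ∂M.law x
      = ∑' k : ℕ, ∫⁻ ω, ({ω' | (k : ℕ∞) < τ ω'}.indicator fun ω => f (ω k)) ω ∂M.law x :=
        lintegral_tsum fun k => (Measurable.indicator (f := fun ω => f (ω k))
          (by exact hf.comp (measurable_pi_apply k)) (measSet_lt τ hst k)).aemeasurable
    _ = ∑' k : ℕ, ∫⁻ ω in {ω | (k : ℕ∞) < τ ω}, f (ω k) ∂M.law x :=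
        tsum_congr fun k => lintegral_indicator (measSet_lt τ hst k) _

lemma Qop_int_form (hst : IsPathStoppingTime τ) (hθ : ThetaCompatible M τ)
    (hτ : ∀ x, EtauE M τ x ≠ ⊤) (f : X → ℝ≥0∞) (x : X) :
    Qop M τ f x = ∫⁻ ω, (∑' k : ℕ,
      ({ω' | τ ω' = ((k + 1 : ℕ) : ℕ∞)}.indicator fun ω => f (ω (k + 1))) ω) ∂M.law x := by
  have h1 : Qop M τ f x = ∫⁻ ω, ({ω' : ℕ → X | τ ω' ≠ ⊤}.indicator
      (fun ω => f (ω (τ ω).toNat))) ω ∂M.law x :=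
    (lintegral_indicator (measSet_ne_top τ hst) _).symm
  rw [h1]
  refine lintegral_congr_ae ?_
  filter_upwards [ae_tau_ne_top M τ hst hτ x, ae_one_le_tau M τ hθ x] with ω hne h1
  rw [Set.indicator_of_mem (show ω ∈ {ω' | τ ω' ≠ ⊤} from hne),
    tsum_indicator_eq τ hne h1]
  have h2 : (τ ω).toNat - 1 + 1 = (τ ω).toNat := by
    have := one_le_toNat τ hne h1
    omega
  rw [h2]

lemma Qop_eq_tsum (hst : IsPathStoppingTime τ) (hθ : ThetaCompatible M τ)
    (hτ : ∀ x, EtauE M τ x ≠ ⊤) {f : X → ℝ≥0∞} (hf : Measurable f) (x : X) :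
    Qop M τ f x = ∑' k : ℕ,
      ∫⁻ ω in {ω | τ ω = ((k + 1 : ℕ) : ℕ∞)}, f (ω (k + 1)) ∂M.law x := by
  rw [Qop_int_form M τ hst hθ hτ f x]
  calc ∫⁻ ω, (∑' k : ℕ,
        ({ω' | τ ω' = ((k + 1 : ℕ) : ℕ∞)}.indicator fun ω => f (ω (k + 1))) ω) ∂M.law x
      = ∑' k : ℕ, ∫⁻ ω,
          ({ω' | τ ω' = ((k + 1 : ℕ) : ℕ∞)}.indicator fun ω => f (ω (k + 1))) ω ∂M.law x :=
        lintegral_tsum fun k => (Measurable.indicator (f := fun ω => f (ω (k + 1)))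
          (by exact hf.comp (measurable_pi_apply (k + 1))) (measSet_eq τ hst _)).aemeasurable
    _ = _ := tsum_congr fun k => lintegral_indicator (measSet_eq τ hst _) _

lemma RopPop_int_form (hst : IsPathStoppingTime τ) (hτ : ∀ x, EtauE M τ x ≠ ⊤)
    {f : X → ℝ≥0∞} (hf : Measurable f) (x : X) :
    Rop M τ (Pop M f) x = ∫⁻ ω, (∑' k : ℕ,
      ({ω' | (k : ℕ∞) < τ ω'}.indicator fun ω => f (ω (k + 1))) ω) ∂M.law x := by
  rw [Rop_eq_tsum M τ hst hτ (measurable_Pop M hf) x]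
  have hterm : ∀ k : ℕ, ∫⁻ ω in {ω | (k : ℕ∞) < τ ω}, Pop M f (ω k) ∂M.law x
      = ∫⁻ ω in {ω | (k : ℕ∞) < τ ω}, f (ω (k + 1)) ∂M.law x := by
    intro k
    have h := (M.markov x k _ (measSet_lt_filt τ hst k) (fun η => f (η 1))
      (hf.comp (measurable_pi_apply 1))).symm
    simp only [] at h
    rw [Nat.add_comm 1 k] at h
    exact h
  rw [tsum_congr hterm]
  calc ∑' k : ℕ, ∫⁻ ω in {ω | (k : ℕ∞) < τ ω}, f (ω (k + 1)) ∂M.law x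
      = ∑' k : ℕ, ∫⁻ ω,
          ({ω' | (k : ℕ∞) < τ ω'}.indicator fun ω => f (ω (k + 1))) ω ∂M.law x :=
        tsum_congr fun k => (lintegral_indicator (measSet_lt τ hst k) _).symm
    _ = _ := (lintegral_tsum fun k => (Measurable.indicator (f := fun ω => f (ω (k + 1)))
          (by exact hf.comp (measurable_pi_apply (k + 1))) (measSet_lt τ hst k)).aemeasurable).symm

end Aux3
section Aux4

open ProbabilityTheory

variable {X : Type*} [MeasurableSpace X] [MeasurableSingletonClass X]
  (M : MarkovChain X) (τ : (ℕ → X) → ℕ∞)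

lemma lint_eval_zero (x : X) {f : X → ℝ≥0∞} : ∫⁻ ω, f (ω 0) ∂M.law x = f x := by
  have := M.prob x
  rw [lintegral_congr_ae ((ae_start M x).mono fun ω h => by rw [h])]
  simp

lemma key_identity (hst : IsPathStoppingTime τ) (hθ : ThetaCompatible M τ)
    (hτ : ∀ x, EtauE M τ x ≠ ⊤) {f : X → ℝ≥0∞} (hf : Measurable f) (x : X) :
    Rop M τ (Pop M f) x + f x = Rop M τ f x + Qop M τ f x := by
  have hmA : Measurable fun ω : ℕ → X =>
      ∑' k : ℕ, ({ω' | (k : ℕ∞) < τ ω'}.indicator fun ω => f (ω (k + 1))) ω :=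
    Measurable.ennreal_tsum fun k => Measurable.indicator
      (by exact hf.comp (measurable_pi_apply (k + 1))) (measSet_lt τ hst k)
  have hmB : Measurable fun ω : ℕ → X =>
      ∑' k : ℕ, ({ω' | (k : ℕ∞) < τ ω'}.indicator fun ω => f (ω k)) ω :=
    Measurable.ennreal_tsum fun k => Measurable.indicator
      (by exact hf.comp (measurable_pi_apply k)) (measSet_lt τ hst k)
  rw [RopPop_int_form M τ hst hτ hf x, Rop_int_form M τ hst hτ f x,
    Qop_int_form M τ hst hθ hτ f x, ← lint_eval_zero M x (f := f),
    ← lintegral_add_right _ (by exact hf.comp (measurable_pi_apply 0)),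
    ← lintegral_add_left hmB]
  refine lintegral_congr_ae ?_
  filter_upwards [ae_good M τ hst hθ hτ x] with ω hω
  obtain ⟨⟨h1, hne⟩, -⟩ := hω
  rw [tsum_indicator_lt τ hne, tsum_indicator_lt τ hne, tsum_indicator_eq τ hne h1]
  have hm1 : 1 ≤ (τ ω).toNat := one_le_toNat τ hne h1
  have h2 : (τ ω).toNat - 1 + 1 = (τ ω).toNat := by omega
  rw [h2, ← Finset.sum_range_succ' (fun k => f (ω k)) ((τ ω).toNat),
    ← Finset.sum_range_succ (fun k => f (ω k)) ((τ ω).toNat)]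

lemma Qop_le_RopPop (hst : IsPathStoppingTime τ) (hθ : ThetaCompatible M τ)
    (hτ : ∀ x, EtauE M τ x ≠ ⊤) {f : X → ℝ≥0∞} (hf : Measurable f) (x : X) :
    Qop M τ f x ≤ Rop M τ (Pop M f) x := by
  rw [Qop_int_form M τ hst hθ hτ f x, RopPop_int_form M τ hst hτ hf x]
  refine lintegral_mono fun ω => ?_
  refine ENNReal.tsum_le_tsum fun k => ?_
  refine Set.indicator_le_indicator_of_subset ?_ (fun _ => zero_le) ω
  intro ω' hω'
  rw [Set.mem_setOf_eq] at hω' ⊢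
  rw [hω']
  exact_mod_cast Nat.lt_succ_self k

lemma le_Rop_self (hst : IsPathStoppingTime τ) (hθ : ThetaCompatible M τ)
    (hτ : ∀ x, EtauE M τ x ≠ ⊤) (f : X → ℝ≥0∞) (x : X) :
    f x ≤ Rop M τ f x := by
  rw [Rop_int_form M τ hst hτ f x, ← lint_eval_zero M x (f := f)]
  refine lintegral_mono_ae ?_
  filter_upwards [ae_good M τ hst hθ hτ x] with ω hω
  obtain ⟨⟨h1, _⟩, -⟩ := hω
  have h0 : ω ∈ {ω' | ((0 : ℕ) : ℕ∞) < τ ω'} := by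
    rw [Set.mem_setOf_eq, Nat.cast_zero]
    exact lt_of_lt_of_le zero_lt_one h1
  calc f (ω 0) = ({ω' | ((0 : ℕ) : ℕ∞) < τ ω'}.indicator fun ω => f (ω 0)) ω :=
        (Set.indicator_of_mem h0 (fun ω : ℕ → X => f (ω 0))).symm
    _ ≤ ∑' k : ℕ, ({ω' | (k : ℕ∞) < τ ω'}.indicator fun ω => f (ω k)) ω :=
        ENNReal.le_tsum 0

lemma Rop_Sop (hst : IsPathStoppingTime τ) (hθ : ThetaCompatible M τ)
    (hτ : ∀ x, EtauE M τ x ≠ ⊤) {f : X → ℝ≥0∞} (hf : Measurable f) (x : X) :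
    Rop M τ (Sop M τ f) x = Qop M τ f x := by
  rw [Rop_eq_tsum M τ hst hτ (measurable_Sop M τ hst hf) x,
    Qop_eq_tsum M τ hst hθ hτ hf x]
  refine tsum_congr fun k => ?_
  set ind : (ℕ → X) → ℝ≥0∞ := fun η => ({η' | τ η' = 1}.indicator fun η => f (η 1)) η
    with hind
  have hgmeas : Measurable ind :=
    Measurable.indicator (by exact hf.comp (measurable_pi_apply 1)) (measSet_eq τ hst 1)
  have hS : ∀ y : X, ∫⁻ η, ind η ∂M.law y = Sop M τ f y := fun y =>
    lintegral_indicator (measSet_eq τ hst 1) _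
  have hmk := (M.markov x k _ (measSet_lt_filt τ hst k) ind hgmeas).symm
  calc ∫⁻ ω in {ω | (k : ℕ∞) < τ ω}, Sop M τ f (ω k) ∂M.law x
      = ∫⁻ ω in {ω | (k : ℕ∞) < τ ω}, ∫⁻ η, ind η ∂M.law (ω k) ∂M.law x :=
        lintegral_congr fun ω => (hS (ω k)).symm
    _ = ∫⁻ ω in {ω | (k : ℕ∞) < τ ω}, ind (fun j => ω (j + k)) ∂M.law x := hmk
    _ = ∫⁻ ω, ({ω' | (k : ℕ∞) < τ ω'}.indicator
          fun ω => ind (fun j => ω (j + k))) ω ∂M.law x :=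
        (lintegral_indicator (measSet_lt τ hst k) _).symm
    _ = ∫⁻ ω, ({ω' | τ ω' = ((k + 1 : ℕ) : ℕ∞)}.indicator
          fun ω => f (ω (k + 1))) ω ∂M.law x := ?_
    _ = ∫⁻ ω in {ω | τ ω = ((k + 1 : ℕ) : ℕ∞)}, f (ω (k + 1)) ∂M.law x :=
        lintegral_indicator (measSet_eq τ hst _) _
  refine lintegral_congr_ae ?_
  filter_upwards [ae_good M τ hst hθ hτ x] with ω hω
  obtain ⟨⟨h1, hne⟩, hiter⟩ := hω
  by_cases hk : (k : ℕ∞) < τ ω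
  · rw [Set.indicator_of_mem (show ω ∈ {ω' | (k : ℕ∞) < τ ω'} from hk)]
    have hshift := hiter k hk
    obtain ⟨m, hm⟩ : ∃ m : ℕ, τ ω = (m : ℕ∞) := ⟨(τ ω).toNat, (ENat.coe_toNat hne).symm⟩
    have hkm : k < m := by rw [hm] at hk; exact_mod_cast hk
    by_cases heq : m = k + 1
    · have hmem2 : (fun j => ω (j + k)) ∈ {η' | τ η' = 1} := by
        rw [Set.mem_setOf_eq, hshift, hm, heq, ← ENat.coe_sub]
        norm_cast
        omega
      rw [Set.indicator_of_mem (show ω ∈ {ω' | τ ω' = ((k + 1 : ℕ) : ℕ∞)} from by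
        rw [Set.mem_setOf_eq, hm, heq])]
      simp only [hind]
      rw [Set.indicator_of_mem hmem2]
      show f (ω (1 + k)) = f (ω (k + 1))
      rw [Nat.add_comm]
    · have hmem2 : (fun j => ω (j + k)) ∉ {η' | τ η' = 1} := by
        rw [Set.mem_setOf_eq, hshift, hm, ← ENat.coe_sub]
        intro hcon
        have : m - k = 1 := by exact_mod_cast hcon
        omega
      rw [Set.indicator_of_notMem (show ω ∉ {ω' | τ ω' = ((k + 1 : ℕ) : ℕ∞)} from by
        rw [Set.mem_setOf_eq, hm]
        intro hcon
        exact heq (by exact_mod_cast hcon))]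
      simp only [hind]
      rw [Set.indicator_of_notMem hmem2]
  · rw [Set.indicator_of_notMem (show ω ∉ {ω' | (k : ℕ∞) < τ ω'} from hk)]
    rw [Set.indicator_of_notMem (show ω ∉ {ω' | τ ω' = ((k + 1 : ℕ) : ℕ∞)} from ?_)]
    intro hcon
    rw [Set.mem_setOf_eq] at hcon
    apply hk
    rw [hcon]
    exact_mod_cast Nat.lt_succ_self k

end Aux4
section Main

open ProbabilityTheory

variable {X : Type*} [MeasurableSpace X] [MeasurableSingletonClass X]
  (M : MarkovChain X) (τ : (ℕ → X) → ℕ∞)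

/-- the measure `R*ν` -/
def Rmeasure (ν : Measure X) : Measure X :=
  Measure.sum fun k : ℕ =>
    (((ν.bind M.law).restrict {ω | (k : ℕ∞) < τ ω}).map fun ω => ω k)

omit [MeasurableSingletonClass X] in
lemma lintegral_Rmeasure (hst : IsPathStoppingTime τ) (hτ : ∀ x, EtauE M τ x ≠ ⊤)
    (ν : Measure X) {g : X → ℝ≥0∞} (hg : Measurable g) :
    ∫⁻ y, g y ∂(Rmeasure M τ ν) = ∫⁻ x, Rop M τ g x ∂ν := by
  rw [Rmeasure, lintegral_sum_measure]
  have hk : ∀ k : ℕ,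
      (∫⁻ y, g y ∂(((ν.bind M.law).restrict {ω | (k : ℕ∞) < τ ω}).map fun ω => ω k))
      = ∫⁻ x, ∫⁻ ω, ({ω' | (k : ℕ∞) < τ ω'}.indicator fun ω => g (ω k)) ω ∂M.law x ∂ν := by
    intro k
    rw [lintegral_map hg (measurable_pi_apply k), ← lintegral_indicator (measSet_lt τ hst k)]
    exact Measure.lintegral_bind M.meas_law.aemeasurable
      (Measurable.indicator (f := fun ω : ℕ → X => g (ω k))
        (by exact hg.comp (measurable_pi_apply k)) (measSet_lt τ hst k)).aemeasurable
  rw [tsum_congr hk]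
  have hswap := (lintegral_tsum (μ := ν) (f := fun (k : ℕ) (x : X) =>
      ∫⁻ ω, ({ω' | (k : ℕ∞) < τ ω'}.indicator fun ω => g (ω k)) ω ∂M.law x)
    fun k => (Measurable.lintegral_kernel (κ := ker M)
      (Measurable.indicator (f := fun ω : ℕ → X => g (ω k))
        (by exact hg.comp (measurable_pi_apply k)) (measSet_lt τ hst k))).aemeasurable).symm
  rw [hswap]
  refine lintegral_congr fun x => ?_
  rw [Rop_int_form M τ hst hτ g x,
    lintegral_tsum fun k => (Measurable.indicator (f := fun ω : ℕ → X => g (ω k))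
      (by exact hg.comp (measurable_pi_apply k)) (measSet_lt τ hst k)).aemeasurable]

lemma iSup_min_nat (a : ℝ≥0∞) : ⨆ n : ℕ, min a (n : ℝ≥0∞) = a := by
  refine le_antisymm (iSup_le fun n => min_le_left _ _) ?_
  rcases eq_or_ne a ⊤ with rfl | ha
  · conv_lhs => rw [← ENNReal.iSup_natCast]
    exact iSup_mono fun n => le_of_eq (min_eq_right le_top).symm
  · obtain ⟨n, hn⟩ := ENNReal.exists_nat_gt ha
    exact le_trans (le_of_eq (min_eq_left hn.le).symm) (le_iSup (fun n : ℕ => min a n) n)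

end Main
/-- Lemma 1.9: if `ν` is a nonzero `Q`-invariant measure then `R*ν` is a nonzero
`P`-invariant measure, `S*R*ν = ν`, `ν ≪ R*ν`; and if `QR(1)` is bounded then `R*ν` is
finite iff `ν` is finite. -/
theorem stmt3 [MetricSpace X] [CompleteSpace X] [TopologicalSpace.SeparableSpace X] [BorelSpace X]
    (M : MarkovChain X) (τ : (ℕ → X) → ℕ∞)
    (hst : IsPathStoppingTime τ) (hθ : ThetaCompatible M τ)
    (hτ : ∀ x, EtauE M τ x ≠ ⊤)
    (ν : Measure X) (hν0 : ν ≠ 0) (hinv : QInvariant M τ ν) :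
    ∃ m : Measure X, RstarEq M τ ν m ∧ m ≠ 0 ∧ PInvariant M m ∧ ν ≪ m ∧
      SstarEq M τ m ν ∧
      ((∃ C : ℝ≥0, ∀ x, Qop M τ (Rop M τ 1) x ≤ (C : ℝ≥0∞)) →
        (IsFiniteMeasure m ↔ IsFiniteMeasure ν)) := by
  classical
  set m := Rmeasure M τ ν with hmdef
  have hD : ∀ {g : X → ℝ≥0∞}, Measurable g →
      ∫⁻ y, g y ∂m = ∫⁻ x, Rop M τ g x ∂ν :=
    fun hg => lintegral_Rmeasure M τ hst hτ ν hg
  have hRstar : RstarEq M τ ν m := by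
    intro A hA
    rw [← lintegral_indicator_one hA]
    exact hD (measurable_one.indicator hA)
  have hDone : ∫⁻ x, (1 : ℝ≥0∞) ∂m = ∫⁻ x, Rop M τ 1 x ∂ν := by
    simpa using hD measurable_one
  have hmono0 : ν Set.univ ≤ m Set.univ := by
    rw [← lintegral_one (μ := ν), ← lintegral_one (μ := m), hDone]
    exact lintegral_mono fun x => le_Rop_self M τ hst hθ hτ 1 x
  have hm0 : m ≠ 0 := by
    intro h0
    apply hν0
    rw [h0] at hmono0
    simp only [Measure.coe_zero, Pi.zero_apply, le_zero_iff] at hmono0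
    exact Measure.measure_univ_eq_zero.1 hmono0
  have hPinv : PInvariant M m := by
    intro f hf hb
    obtain ⟨C, hC, hCb⟩ := hb
    rw [hD (measurable_Pop M hf), hD hf]
    have hQ : ∫⁻ x, Qop M τ f x ∂ν = ∫⁻ x, f x ∂ν := hinv f hf ⟨C, hC, hCb⟩
    by_cases hfin : ∫⁻ x, f x ∂ν = ⊤
    · have h1 : ∫⁻ x, Rop M τ f x ∂ν = ⊤ := by
        have h := lintegral_mono (μ := ν) fun x => le_Rop_self M τ hst hθ hτ f x
        rw [hfin] at h
        exact top_le_iff.1 h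
      have h2 : ∫⁻ x, Rop M τ (Pop M f) x ∂ν = ⊤ := by
        have h := lintegral_mono (μ := ν) fun x => Qop_le_RopPop M τ hst hθ hτ hf x
        rw [hQ, hfin] at h
        exact top_le_iff.1 h
      rw [h1, h2]
    · have hkey := lintegral_congr (μ := ν) fun x => key_identity M τ hst hθ hτ hf x
      rw [lintegral_add_right _ hf, lintegral_add_right _ (measurable_Qop M τ hst hf),
        hQ] at hkey
      exact (ENNReal.add_left_inj hfin).1 hkey
  have habs : ν ≪ m := by
    refine Measure.AbsolutelyContinuous.mk fun A hA h0 => ?_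
    have h1 : ν A ≤ m A := by
      rw [← lintegral_indicator_one hA, ← lintegral_indicator_one (μ := m) hA,
        hD (measurable_one.indicator hA)]
      exact lintegral_mono fun x => le_Rop_self M τ hst hθ hτ (A.indicator 1) x
    rw [h0] at h1
    exact le_zero_iff.1 h1
  have hSstar : SstarEq M τ m ν := by
    intro A hA
    have hind : Measurable (A.indicator (1 : X → ℝ≥0∞)) := measurable_one.indicator hA
    have h1 : ∫⁻ x, Sop M τ (A.indicator 1) x ∂m
        = ∫⁻ x, Rop M τ (Sop M τ (A.indicator 1)) x ∂ν :=
      hD (measurable_Sop M τ hst hind)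
    have h2 : ∫⁻ x, Rop M τ (Sop M τ (A.indicator 1)) x ∂ν
        = ∫⁻ x, Qop M τ (A.indicator 1) x ∂ν :=
      lintegral_congr fun x => Rop_Sop M τ hst hθ hτ hind x
    have h3 : ∫⁻ x, Qop M τ (A.indicator 1) x ∂ν = ∫⁻ x, A.indicator 1 x ∂ν :=
      hinv _ hind ⟨1, ENNReal.one_ne_top, fun x => by
        by_cases h : x ∈ A <;> simp [h]⟩
    have h4 : ∫⁻ x, A.indicator (1 : X → ℝ≥0∞) x ∂ν = ν A := lintegral_indicator_one hA
    rw [h1, h2, h3, h4]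
  have hfin : (∃ C : ℝ≥0, ∀ x, Qop M τ (Rop M τ 1) x ≤ (C : ℝ≥0∞)) →
      (IsFiniteMeasure m ↔ IsFiniteMeasure ν) := by
    rintro ⟨C, hC⟩
    constructor
    · intro hmfin
      exact ⟨lt_of_le_of_lt hmono0 (measure_lt_top m Set.univ)⟩
    · intro hνfin
      refine ⟨?_⟩
      have hmuniv : m Set.univ = ∫⁻ x, Rop M τ 1 x ∂ν := by
        rw [← lintegral_one (μ := m), hDone]
      have hR1meas : Measurable (Rop M τ (1 : X → ℝ≥0∞)) :=
        measurable_Rop M τ hst measurable_one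
      have hmin : ∀ n : ℕ, Measurable fun x => min (Rop M τ 1 x) (n : ℝ≥0∞) :=
        fun n => hR1meas.min measurable_const
      have hmono : Monotone fun (n : ℕ) (x : X) => min (Rop M τ 1 x) (n : ℝ≥0∞) :=
        fun a b hab x => min_le_min le_rfl (by exact_mod_cast hab)
      have hsup : ∫⁻ x, Rop M τ 1 x ∂ν
          = ⨆ n : ℕ, ∫⁻ x, min (Rop M τ 1 x) (n : ℝ≥0∞) ∂ν := by
        rw [← lintegral_iSup hmin hmono]
        exact lintegral_congr fun x => (iSup_min_nat _).symm
      have hbound : ∀ n : ℕ, ∫⁻ x, min (Rop M τ 1 x) (n : ℝ≥0∞) ∂ν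
          ≤ (C : ℝ≥0∞) * ν Set.univ := by
        intro n
        rw [← hinv _ (hmin n) ⟨(n : ℝ≥0∞), ENNReal.natCast_ne_top n,
          fun x => min_le_right _ _⟩]
        calc ∫⁻ x, Qop M τ (fun x => min (Rop M τ 1 x) (n : ℝ≥0∞)) x ∂ν
            ≤ ∫⁻ _, (C : ℝ≥0∞) ∂ν := lintegral_mono fun x =>
              le_trans (lintegral_mono fun ω => min_le_left _ _) (hC x)
          _ = (C : ℝ≥0∞) * ν Set.univ := lintegral_const _
      rw [hmuniv, hsup]
      exact lt_of_le_of_lt (iSup_le hbound)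
        (ENNReal.mul_lt_top ENNReal.coe_lt_top (measure_lt_top ν Set.univ))
  exact ⟨m, hRstar, hm0, hPinv, habs, hSstar, hfin⟩

end
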